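/- Let (G, D) be a connection of rank μ that is regular at 0, i.e. there exists a finitely generated ℂ[τ]-submodule L ⊆ G with ℂ[τ,τ⁻¹]·L = G and τ·D(L) ⊆ L. Let (V_β)_{β∈ℚ} be a family of ℂ[τ]-submodules of G satisfying all axioms of a Malgrange–Kashiwara filtration, except that axiom (iii) is weakened to: for each β there is a finite subset S ⊆ V_β such that V_β is the smallest ℂ[τ]-submodule of G containing S and stable under τ∘D. Then every V_β is a free ℂ[τ]-module of rank μ. -/

import Mathlib

open LaurentPolynomial

set_option synthInstance.maxHeartbeats 1000000
set_option maxHeartbeats 2000000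

noncomputable section

/-- The ring `ℂ[τ,τ⁻¹]` of Laurent polynomials. -/
abbrev 𝕃 : Type := LaurentPolynomial ℂ

/-- the variable `τ` -/
noncomputable def τ : 𝕃 := T 1

/-- `θ := τ⁻¹` -/
noncomputable def θ : 𝕃 := T (-1)

/-- `ℂ[τ]` as a subring (subalgebra) of `ℂ[τ,τ⁻¹]` -/
noncomputable def Cτ : Subalgebra ℂ 𝕃 := Algebra.adjoin ℂ {τ}

/-- `ℂ[θ]` as a subring (subalgebra) of `ℂ[τ,τ⁻¹]` -/
noncomputable def Cθ : Subalgebra ℂ 𝕃 := Algebra.adjoin ℂ {θ}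

variable {G : Type} [AddCommGroup G] [Module ℂ G] [Module 𝕃 G] [IsScalarTower ℂ 𝕃 G]

/-- scalar multiplication by a Laurent polynomial, as a `ℂ`-linear endomorphism -/
noncomputable def smulL (p : 𝕃) : G →ₗ[ℂ] G := p • (LinearMap.id : G →ₗ[ℂ] G)

/- ### Auxiliary lemmas -/

lemma aux_mem_span2 {R S M : Type} [CommRing R] [CommRing S]
    [AddCommGroup M] [Module S M] [Module R M] [SMul R S] [IsScalarTower R S M]
    {ι : Type} (W : Submodule R M) (b : Module.Basis ι R ↥W)
    (x : M) (hx : x ∈ W) :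
    x ∈ Submodule.span S (Set.range fun i => ((b i : ↥W) : M)) := by
  have h1 : (⟨x, hx⟩ : ↥W) ∈ Submodule.span R (Set.range ⇑b) := b.mem_span _
  have h2 := Submodule.mem_map_of_mem (f := W.subtype) h1
  rw [Submodule.map_span] at h2
  have e : ⇑W.subtype '' Set.range ⇑b = Set.range fun i => ((b i : ↥W) : M) := by
    rw [← Set.range_comp]; rfl
  rw [e] at h2
  exact Submodule.span_le_restrictScalars R S _ h2

lemma aux_basis_transfer {R S M : Type} [CommRing R] [CommRing S] [Nontrivial S]
    [Algebra R S] [AddCommGroup M] [Module S M] [Module R M] [IsScalarTower R S M]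
    (hinj : Function.Injective (algebraMap R S))
    {ι : Type} [Fintype ι] (W : Submodule R M) (b : Module.Basis ι R ↥W)
    (hmul : ∀ c : ι → S, ∃ u : Sˣ, ∀ i, (u : S) * c i ∈ (algebraMap R S).range)
    (hspan : ∀ g : M, g ∈ Submodule.span S (Set.range (fun i => ((b i : ↥W) : M)))) :
    Nonempty (Module.Basis ι S M) := by
  set v : ι → M := fun i => ((b i : ↥W) : M) with hv
  have hLind : LinearIndependent S v := by
    rw [Fintype.linearIndependent_iff]
    intro c hc i
    obtain ⟨u, hu⟩ := hmul c
    choose d hd using hu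
    have hzero : ∑ j, d j • b j = 0 := by
      have e : ((∑ j, d j • b j : ↥W) : M) = 0 := by
        rw [Submodule.coe_sum]
        have e1 : ∀ j, ((d j • b j : ↥W) : M) = (u : S) • (c j • v j) := by
          intro j
          rw [Submodule.coe_smul, ← algebraMap_smul S (d j), hd j, mul_smul]
        rw [Finset.sum_congr rfl (fun j _ => e1 j), ← Finset.smul_sum, hc, smul_zero]
      exact Subtype.ext e
    have h0 := Fintype.linearIndependent_iff.mp b.linearIndependent _ hzero i
    have h1 : (u : S) * c i = 0 := by rw [← hd i, h0, map_zero]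
    have := u.mul_right_eq_zero.mp h1
    exact this
  exact ⟨Module.Basis.mk hLind (fun x _ => hspan x)⟩


instance : IsDomain 𝕃 := NoZeroDivisors.to_isDomain _

lemma aux_tau_mul_theta : τ * θ = 1 := by
  rw [τ, θ, ← T_add, add_neg_cancel, T_zero]

lemma aux_tau_mem : τ ∈ Cτ := Algebra.self_mem_adjoin_singleton ℂ τ

lemma aux_range_toLaurentAlg : (Polynomial.toLaurentAlg : Polynomial ℂ →ₐ[ℂ] 𝕃).range = Cτ := by
  rw [Cτ, ← Algebra.map_top, ← Polynomial.adjoin_X (R := ℂ), AlgHom.map_adjoin]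
  simp [Polynomial.toLaurentAlg_apply, Polynomial.toLaurent_X, τ]

lemma aux_toLaurent_mem (f : Polynomial ℂ) : Polynomial.toLaurent f ∈ Cτ := by
  rw [← aux_range_toLaurentAlg]
  exact ⟨f, rfl⟩

lemma aux_exists_T_mul (p : 𝕃) : ∃ n : ℕ, T n * p ∈ Cτ := by
  obtain ⟨n, f, hf⟩ := LaurentPolynomial.exists_T_pow p
  exact ⟨n, by rw [mul_comm, ← hf]; exact aux_toLaurent_mem f⟩

lemma aux_T_mul_mem_succ (p : 𝕃) (n : ℕ) (h : T n * p ∈ Cτ) : T (n+1 : ℕ) * p ∈ Cτ := by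
  have : (T (n+1 : ℕ) : 𝕃) * p = τ * (T n * p) := by
    rw [τ, ← mul_assoc, ← T_add]; push_cast; ring_nf
  rw [this]
  exact mul_mem aux_tau_mem h

lemma aux_T_mul_mem_le (p : 𝕃) {m n : ℕ} (hmn : m ≤ n) (h : T m * p ∈ Cτ) :
    T n * p ∈ Cτ := by
  induction n with
  | zero =>
    have : m = 0 := Nat.le_zero.mp hmn
    rwa [← this]
  | succ k ih =>
    rcases Nat.lt_or_ge m (k+1) with hlt | hge
    · exact aux_T_mul_mem_succ p k (ih (Nat.lt_succ_iff.mp hlt))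
    · have : m = k + 1 := le_antisymm hmn hge
      rwa [← this]

lemma aux_surj : Function.Surjective
    ((Polynomial.toLaurentAlg : Polynomial ℂ →ₐ[ℂ] 𝕃).codRestrict Cτ
      (fun f => aux_toLaurent_mem f)) := by
  rintro ⟨y, hy⟩
  rw [← aux_range_toLaurentAlg] at hy
  obtain ⟨x, hx⟩ := hy
  exact ⟨x, Subtype.ext hx⟩

instance : IsPrincipalIdealRing Cτ :=
  IsPrincipalIdealRing.of_surjective
    ((Polynomial.toLaurentAlg : Polynomial ℂ →ₐ[ℂ] 𝕃).codRestrict Cτ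
      (fun f => aux_toLaurent_mem f)).toRingHom aux_surj

instance : IsNoetherianRing Cτ := by infer_instance

instance aux_nzsd {G : Type} [AddCommGroup G] [Module 𝕃 G] [Module.Free 𝕃 G] :
    NoZeroSMulDivisors Cτ G := by
  constructor
  intro c g h
  have h' : (c : 𝕃) • g = 0 := h
  rcases smul_eq_zero.mp h' with h0 | h0
  · exact Or.inl (by exact_mod_cast h0)
  · exact Or.inr h0

/-- the steps of the Malgrange–Kashiwara filtration of a connection
which is regular at `0` are free `ℂ[τ]`-modules of rank `μ`. -/
theorem statement5 (μ : ℕ) (G : Type) [AddCommGroup G] [Module ℂ G] [Module 𝕃 G]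
    [IsScalarTower ℂ 𝕃 G] [Module.Free 𝕃 G] (hrank : Module.finrank 𝕃 G = μ)
    (dτ : Derivation ℂ 𝕃 𝕃) (hdτ : dτ τ = 1)
    (D : G →ₗ[ℂ] G) (hD : ∀ (p : 𝕃) (g : G), D (p • g) = dτ p • g + p • D g)
    -- regularity at 0
    (hreg : ∃ L : Submodule Cτ G, L.FG ∧ Submodule.span 𝕃 (L : Set G) = ⊤ ∧
      ∀ g ∈ L, τ • D g ∈ L)
    (V : ℚ → Submodule Cτ G)
    -- axioms (i), (ii)
    (hmono : ∀ ⦃β γ : ℚ⦄, β ≤ γ → V β ≤ V γ)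
    (hexh : ∀ g : G, ∃ β : ℚ, g ∈ V β)
    -- axiom (iii), weakened: `V_β` is the smallest `ℂ[τ]`-submodule containing a
    -- finite set `S` and stable under `τ∘D`
    (hstable : ∀ β : ℚ, ∀ g ∈ V β, τ • D g ∈ V β)
    (hgen : ∀ β : ℚ, ∃ S : Finset G, (∀ x ∈ S, x ∈ V β) ∧
      ∀ W : Submodule Cτ G, (∀ x ∈ S, x ∈ W) → (∀ x ∈ W, τ • D x ∈ W) → V β ≤ W)
    -- axiom (iv)
    (htau : ∀ β : ℚ, ∀ x : G, x ∈ V (β - 1) ↔ ∃ g ∈ V β, x = τ • g)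
    -- axiom (v)
    (hdsh : ∀ β : ℚ, ∀ g ∈ V β, D g ∈ V (β + 1))
    (hgen' : ∃ β₀ : ℚ, ∀ β ≥ β₀, ∀ x : G, x ∈ V (β + 1) ↔ ∃ v ∈ V β, ∃ w ∈ V β, x = v + D w)
    -- axiom (vi)
    (hdisc : ∃ A : Finset ℚ, (∀ a ∈ A, 0 ≤ a ∧ a < 1) ∧
      ∀ β : ℚ, (∀ a ∈ A, ∀ k : ℤ, β ≠ a + k) → ∀ x : G, x ∈ V β ↔ ∃ γ < β, x ∈ V γ)
    -- axiom (vii)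
    (hnilp : ∀ β : ℚ, ∃ N : ℕ, ∀ x ∈ V β,
      ∃ γ < β, (((smulL τ ∘ₗ D + (β : ℂ) • LinearMap.id : G →ₗ[ℂ] G)) ^ N) x ∈ V γ) :
    ∀ β : ℚ, Module.Free Cτ ↥(V β) ∧ Module.finrank Cτ ↥(V β) = μ := by
  intro β
  obtain ⟨L, hLfg, hLspan, hLstab⟩ := hreg
  -- multiplication by θ as a Cτ-linear endomorphism of G
  let θm : G →ₗ[Cτ] G :=
    { toFun := fun g => θ • g
      map_add' := fun x y => smul_add θ x y
      map_smul' := fun c g => by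
        show θ • ((c : 𝕃) • g) = (c : 𝕃) • (θ • g)
        rw [smul_smul, smul_smul, mul_comm] }
  -- basic smul computations
  have hθτ : ∀ x : G, θ • τ • x = x := by
    intro x; rw [smul_smul, mul_comm, aux_tau_mul_theta, one_smul]
  have hτθ : ∀ x : G, τ • θ • x = x := by
    intro x; rw [smul_smul, aux_tau_mul_theta, one_smul]
  have hτg : ∀ (W : Submodule Cτ G) (x : G), x ∈ W → τ • x ∈ W := by
    intro W x hx
    exact W.smul_mem ⟨τ, aux_tau_mem⟩ hx
  have hCsmul : ∀ (p : 𝕃) (hp : p ∈ Cτ) (W : Submodule Cτ G) (x : G), x ∈ W → p • x ∈ W := by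
    intro p hp W x hx
    exact W.smul_mem ⟨p, hp⟩ hx
  -- the chain of lattices
  set N : ℕ → Submodule Cτ G := fun k => (Submodule.map θm)^[k] L with hN
  have hNsucc : ∀ k, N (k+1) = Submodule.map θm (N k) := by
    intro k
    simp only [hN, Function.iterate_succ_apply']
  have hNfg : ∀ k, (N k).FG := by
    intro k
    induction k with
    | zero => exact hLfg
    | succ k ih => rw [hNsucc]; exact Submodule.FG.map _ ih
  have hNmono : ∀ k, N k ≤ N (k+1) := by
    intro k x hx
    rw [hNsucc]
    exact ⟨τ • x, hτg _ _ hx, hθτ x⟩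
  have hNle : ∀ {j k : ℕ}, j ≤ k → N j ≤ N k := by
    intro j k hjk
    induction k with
    | zero => rw [Nat.le_zero.mp hjk]
    | succ k ih =>
      rcases Nat.lt_or_ge j (k+1) with hlt | hge
      · exact le_trans (ih (Nat.lt_succ_iff.mp hlt)) (hNmono k)
      · rw [le_antisymm hjk hge]
  -- the derivation identity
  have hdθ : τ * dτ θ = -θ := by
    have h0 : dτ (τ * θ) = 0 := by rw [aux_tau_mul_theta]; exact dτ.map_one_eq_zero
    have h1 := dτ.leibniz τ θ
    rw [h0, hdτ, smul_eq_mul, smul_eq_mul, mul_one] at h1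
    linear_combination -h1
  -- stability of each N k under τ∘D
  have hNstab : ∀ k, ∀ g ∈ N k, τ • D g ∈ N k := by
    intro k
    induction k with
    | zero => exact hLstab
    | succ k ih =>
      intro g hg
      rw [hNsucc] at hg ⊢
      obtain ⟨l, hl, rfl⟩ := hg
      have e : τ • D (θm l) = θm (τ • D l + -l) := by
        show τ • D (θ • l) = θ • (τ • D l + -l)
        rw [hD, smul_add, smul_add, smul_smul, smul_smul, hdθ, aux_tau_mul_theta, one_smul,
          hθτ (D l), neg_smul, smul_neg]
        abel
      rw [e]
      exact Submodule.mem_map_of_mem (Submodule.add_mem _ (ih l hl) (Submodule.neg_mem _ hl))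
  -- monotone T-multiplication within a submodule
  have hWT : ∀ (W : Submodule Cτ G), (∀ x ∈ W, τ • x ∈ W) → ∀ (x : G) (n m : ℕ), n ≤ m →
      (T (n:ℤ) : 𝕃) • x ∈ W → (T (m:ℤ) : 𝕃) • x ∈ W := by
    intro W hW x n m hnm h
    induction m with
    | zero => rwa [Nat.le_zero.mp hnm] at h
    | succ k ih =>
      rcases Nat.lt_or_ge n (k+1) with hlt | hge
      · have hk := ih (Nat.lt_succ_iff.mp hlt)
        have : (T ((k:ℤ)+1) : 𝕃) • x = τ • (T (k:ℤ) : 𝕃) • x := by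
          rw [smul_smul, τ, ← T_add, add_comm]
        rw [show ((k+1 : ℕ) : ℤ) = (k:ℤ)+1 by push_cast; ring, this]
        exact hW _ hk
      · rwa [le_antisymm hnm hge] at h
  -- every element of G multiplies into L by a power of τ
  have hLpow : ∀ g : G, ∃ n : ℕ, (T (n:ℤ) : 𝕃) • g ∈ L := by
    intro g
    have hg : g ∈ Submodule.span 𝕃 (L : Set G) := by rw [hLspan]; trivial
    induction hg using Submodule.span_induction with
    | mem x hx => exact ⟨0, by simpa [T_zero] using hx⟩
    | zero => exact ⟨0, by simp⟩
    | add x y hx hy ihx ihy =>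
      obtain ⟨n, hn⟩ := ihx
      obtain ⟨m, hm⟩ := ihy
      refine ⟨max n m, ?_⟩
      rw [smul_add]
      exact Submodule.add_mem _ (hWT L (fun x hx => hτg L x hx) x n _ (le_max_left n m) hn)
        (hWT L (fun x hx => hτg L x hx) y m _ (le_max_right n m) hm)
    | smul p x hx ihx =>
      obtain ⟨n, hn⟩ := ihx
      obtain ⟨m, hm⟩ := aux_exists_T_mul p
      refine ⟨m + n, ?_⟩
      have : (T ((m+n : ℕ):ℤ) : 𝕃) • (p • x) = (T (m:ℤ) * p) • ((T (n:ℤ) : 𝕃) • x) := by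
        rw [smul_smul, smul_smul, mul_assoc, mul_comm p, ← mul_assoc, ← T_add]
        push_cast; ring_nf
      rw [this]
      exact hCsmul _ hm L _ hn
  -- hence every element of G lies in some N k
  have hNrec : ∀ (n : ℕ) (g : G), (T (n:ℤ) : 𝕃) • g ∈ L → g ∈ N n := by
    intro n
    induction n with
    | zero => intro g hg; show g ∈ L; simpa [T_zero] using hg
    | succ n ih =>
      intro g hg
      have h1 : (T (n:ℤ) : 𝕃) • (τ • g) ∈ L := by
        have e : (T (((n+1):ℕ):ℤ) : 𝕃) • g = (T (n:ℤ) : 𝕃) • τ • g := by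
          rw [smul_smul, τ, ← T_add]; push_cast; ring_nf
        rwa [e] at hg
      rw [hNsucc]
      exact ⟨τ • g, ih _ h1, hθτ g⟩
  have hNall : ∀ g : G, ∃ k : ℕ, g ∈ N k := by
    intro g
    obtain ⟨n, hn⟩ := hLpow g
    exact ⟨n, hNrec n g hn⟩
  -- V β is contained in some N K
  obtain ⟨S, hSV, hSmin⟩ := hgen β
  have hVle : ∃ K : ℕ, V β ≤ N K := by
    choose f hf using hNall
    refine ⟨S.sup f, hSmin _ (fun s hs => hNle (Finset.le_sup hs) (hf s)) (hNstab _)⟩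
  obtain ⟨K, hVK⟩ := hVle
  -- V β is finitely generated
  haveI hNKnoeth : IsNoetherian Cτ (N K) := isNoetherian_of_fg_of_noetherian _ (hNfg K)
  have hVfg : (V β).FG := by
    have h1 := IsNoetherian.noetherian (Submodule.comap (N K).subtype (V β))
    have h2 := Submodule.FG.map ((N K).subtype) h1
    rwa [Submodule.map_comap_subtype, inf_eq_right.mpr hVK] at h2
  haveI hVfin : Module.Finite Cτ ↥(V β) := Module.Finite.iff_fg.mpr hVfg
  haveI hVfree : Module.Free Cτ ↥(V β) :=
    @Module.free_of_finite_type_torsion_free' Cτ _ ↥(V β) _ _ _ _ _ _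
  refine ⟨hVfree, ?_⟩
  -- the basis of V β over Cτ
  set ι := Module.Free.ChooseBasisIndex Cτ ↥(V β) with hι
  set b : Module.Basis ι Cτ ↥(V β) := Module.Free.chooseBasis Cτ ↥(V β) with hb
  set v : ι → G := fun i => ((b i : ↥(V β)) : G) with hv
  haveI : Fintype ι := by infer_instance
  -- spanning over 𝕃
  have hdown : ∀ (γ : ℚ) (g : G), g ∈ V γ → ∀ (n : ℕ), (T (n:ℤ) : 𝕃) • g ∈ V (γ - n) := by
    intro γ g hg n
    induction n with
    | zero => simpa [T_zero] using hg
    | succ n ih =>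
      have harg : γ - ((n:ℚ)+1) = γ - n - 1 := by ring
      have hsm : (T (((n:ℕ)+1 : ℕ) : ℤ) : 𝕃) • g = τ • (T (n:ℤ) : 𝕃) • g := by
        rw [smul_smul, τ, ← T_add]; push_cast; ring_nf
      rw [show ((n+1:ℕ):ℚ) = (n:ℚ)+1 by push_cast; ring, harg, hsm]
      exact (htau (γ - n) _).mpr ⟨(T (n:ℤ) : 𝕃) • g, ih, rfl⟩
  have hsmem : ∀ g : G, g ∈ Submodule.span 𝕃 (Set.range v) := by
    intro g
    obtain ⟨γ, hγ⟩ := hexh g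
    set n := ⌈γ - β⌉₊ with hn
    have h1 : γ - n ≤ β := by
      have := Nat.le_ceil (γ - β)
      linarith
    have h2 : (T (n:ℤ) : 𝕃) • g ∈ V β := hmono h1 (hdown γ g hγ n)
    have h3 := Submodule.smul_mem _ (T (-(n:ℤ)) : 𝕃) (aux_mem_span2 (V β) b _ h2)
    rwa [smul_smul, ← T_add, neg_add_cancel, T_zero, one_smul] at h3
  -- the simultaneous-denominator condition
  have hmul : ∀ c : ι → 𝕃, ∃ u : 𝕃ˣ, ∀ i, (u : 𝕃) * c i ∈ (algebraMap Cτ 𝕃).range := by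
    intro c
    choose f hf using fun i => aux_exists_T_mul (c i)
    set M := Finset.univ.sup f with hM
    have hfM : ∀ i, T (M:ℤ) * c i ∈ Cτ := fun i =>
      aux_T_mul_mem_le _ (Finset.le_sup (Finset.mem_univ i)) (hf i)
    obtain ⟨u, hu⟩ := isUnit_T (R := ℂ) (M:ℤ)
    refine ⟨u, fun i => ⟨⟨T (M:ℤ) * c i, hfM i⟩, ?_⟩⟩
    rw [hu]
    rfl
  have hinj : Function.Injective (algebraMap Cτ 𝕃) := fun a b h => Subtype.ext h
  obtain ⟨B⟩ := aux_basis_transfer hinj (V β) b hmul hsmem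
  have hr1 : Module.finrank 𝕃 G = Fintype.card ι := Module.finrank_eq_card_basis B
  have hr2 : Module.finrank Cτ ↥(V β) = Fintype.card ι := Module.finrank_eq_card_basis b
  rw [hr2, ← hr1, hrank]
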